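/- Let N ≥ 1 and let X(x,y,p₁,p₂) = Σ_{k=0}^{N} Σ_{j=0}^{N−k} f_{j,k}(x,y) p₁^j p₂^{N−k−j}, where the f_{j,k}: ℝ² → ℝ are smooth. Then the Poisson bracket {H, X} vanishes identically on ℝ⁴ if and only if for all integers k, j with 0 ≤ k ≤ N+1 and 0 ≤ j ≤ N−k+1 the determining equations hold identically on ℝ²: 2(∂_x f_{j−1,k} + ∂_y f_{j,k}) = (j+1) f_{j+1,k−2} ∂_x V + (N−k+2−j) f_{j,k−2} ∂_y V, with the convention that f_{j,k} := 0 whenever j < 0, k < 0, or j + k > N. -/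

import Mathlib

noncomputable section

/-- Partial derivative with respect to `x` of a function on `ℝ²`. -/
def pdx (f : ℝ × ℝ → ℝ) : ℝ × ℝ → ℝ := fun q => fderiv ℝ f q (1, 0)

/-- Partial derivative with respect to `y` of a function on `ℝ²`. -/
def pdy (f : ℝ × ℝ → ℝ) : ℝ × ℝ → ℝ := fun q => fderiv ℝ f q (0, 1)

/-- The Poisson bracket on phase space `ℝ⁴` with coordinates `(x, y, p₁, p₂)`:
`{F,G} = F_{p₁} G_x + F_{p₂} G_y − F_x G_{p₁} − F_y G_{p₂}`. -/
def pbr (F G : ℝ × ℝ × ℝ × ℝ → ℝ) : ℝ × ℝ × ℝ × ℝ → ℝ := fun z =>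
  fderiv ℝ F z (0, 0, 1, 0) * fderiv ℝ G z (1, 0, 0, 0)
    + fderiv ℝ F z (0, 0, 0, 1) * fderiv ℝ G z (0, 1, 0, 0)
    - fderiv ℝ F z (1, 0, 0, 0) * fderiv ℝ G z (0, 0, 1, 0)
    - fderiv ℝ F z (0, 1, 0, 0) * fderiv ℝ G z (0, 0, 0, 1)

/-- The classical Hamiltonian `H = p₁² + p₂² + V(x,y)`. -/
def Ham (V : ℝ × ℝ → ℝ) : ℝ × ℝ × ℝ × ℝ → ℝ := fun z =>
  z.2.2.1 ^ 2 + z.2.2.2 ^ 2 + V (z.1, z.2.1)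

/-- The candidate integral `X = Σ_{k=0}^{N} Σ_{j=0}^{N−k} f_{j,k}(x,y) p₁^j p₂^{N−k−j}`. -/
def Xfun (N : ℕ) (f : ℤ → ℤ → ℝ × ℝ → ℝ) : ℝ × ℝ × ℝ × ℝ → ℝ := fun z =>
  ∑ k ∈ Finset.range (N + 1), ∑ j ∈ Finset.range (N - k + 1),
    f (j : ℤ) (k : ℤ) (z.1, z.2.1) * z.2.2.1 ^ j * z.2.2.2 ^ (N - k - j)

namespace Stmt0Aux

abbrev P4 := ℝ × ℝ × ℝ × ℝ

def Lx : P4 →L[ℝ] ℝ := ContinuousLinearMap.fst ℝ ℝ (ℝ × ℝ × ℝ)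
def Ly : P4 →L[ℝ] ℝ :=
  (ContinuousLinearMap.fst ℝ ℝ (ℝ × ℝ)).comp (ContinuousLinearMap.snd ℝ ℝ (ℝ × ℝ × ℝ))
def Lp : P4 →L[ℝ] ℝ :=
  (ContinuousLinearMap.fst ℝ ℝ ℝ).comp
    ((ContinuousLinearMap.snd ℝ ℝ (ℝ × ℝ)).comp (ContinuousLinearMap.snd ℝ ℝ (ℝ × ℝ × ℝ)))
def Lr : P4 →L[ℝ] ℝ :=
  (ContinuousLinearMap.snd ℝ ℝ ℝ).comp
    ((ContinuousLinearMap.snd ℝ ℝ (ℝ × ℝ)).comp (ContinuousLinearMap.snd ℝ ℝ (ℝ × ℝ × ℝ)))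
def Lq : P4 →L[ℝ] ℝ × ℝ := Lx.prod Ly

lemma Lp_apply (v : P4) : Lp v = v.2.2.1 := rfl
lemma Lr_apply (v : P4) : Lr v = v.2.2.2 := rfl
lemma Lq_apply (v : P4) : Lq v = (v.1, v.2.1) := rfl

lemma pow_p (j : ℕ) (z : P4) :
    HasFDerivAt (fun z : P4 => z.2.2.1 ^ j) (((j : ℝ) * z.2.2.1 ^ (j - 1)) • Lp) z :=
  (hasDerivAt_pow j z.2.2.1).comp_hasFDerivAt z Lp.hasFDerivAt

lemma pow_r (m : ℕ) (z : P4) :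
    HasFDerivAt (fun z : P4 => z.2.2.2 ^ m) (((m : ℝ) * z.2.2.2 ^ (m - 1)) • Lr) z :=
  (hasDerivAt_pow m z.2.2.2).comp_hasFDerivAt z Lr.hasFDerivAt

lemma comp_q (g : ℝ × ℝ → ℝ) (hg : ContDiff ℝ (⊤ : ℕ∞) g) (z : P4) :
    HasFDerivAt (fun z : P4 => g (z.1, z.2.1)) ((fderiv ℝ g (z.1, z.2.1)).comp Lq) z :=
  ((hg.differentiable (by simp) (z.1, z.2.1)).hasFDerivAt).comp z Lq.hasFDerivAt

lemma term_fderiv (g : ℝ × ℝ → ℝ) (hg : ContDiff ℝ (⊤ : ℕ∞) g) (j m : ℕ) (z : P4) :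
    HasFDerivAt (fun z : P4 => g (z.1, z.2.1) * z.2.2.1 ^ j * z.2.2.2 ^ m)
      ((z.2.2.1 ^ j * z.2.2.2 ^ m) • ((fderiv ℝ g (z.1, z.2.1)).comp Lq)
        + (g (z.1, z.2.1) * ((j : ℝ) * z.2.2.1 ^ (j - 1)) * z.2.2.2 ^ m) • Lp
        + (g (z.1, z.2.1) * z.2.2.1 ^ j * ((m : ℝ) * z.2.2.2 ^ (m - 1))) • Lr) z := by
  have h := ((comp_q g hg z).mul (pow_p j z)).mul (pow_r m z)
  have heq : ((z.2.2.1 ^ j * z.2.2.2 ^ m) • ((fderiv ℝ g (z.1, z.2.1)).comp Lq)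
        + (g (z.1, z.2.1) * ((j : ℝ) * z.2.2.1 ^ (j - 1)) * z.2.2.2 ^ m) • Lp
        + (g (z.1, z.2.1) * z.2.2.1 ^ j * ((m : ℝ) * z.2.2.2 ^ (m - 1))) • Lr)
      = ((g (z.1, z.2.1) * z.2.2.1 ^ j) • ((m : ℝ) * z.2.2.2 ^ (m - 1)) • Lr +
      z.2.2.2 ^ m • (g (z.1, z.2.1) • ((j : ℝ) * z.2.2.1 ^ (j - 1)) • Lp
        + z.2.2.1 ^ j • (fderiv ℝ g (z.1, z.2.1)).comp Lq)) := by
    refine ContinuousLinearMap.ext fun v => ?_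
    simp only [ContinuousLinearMap.add_apply, ContinuousLinearMap.smul_apply,
      ContinuousLinearMap.comp_apply, smul_eq_mul]
    ring
  rw [heq]; exact h

lemma X_hasFDeriv (N : ℕ) (f : ℤ → ℤ → ℝ × ℝ → ℝ) (hf : ∀ j k, ContDiff ℝ (⊤ : ℕ∞) (f j k))
    (z : P4) :
    HasFDerivAt (Xfun N f)
      (∑ k ∈ Finset.range (N + 1), ∑ j ∈ Finset.range (N - k + 1),
        ((z.2.2.1 ^ j * z.2.2.2 ^ (N - k - j)) • ((fderiv ℝ (f (j:ℤ) (k:ℤ)) (z.1, z.2.1)).comp Lq)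
        + (f (j:ℤ) (k:ℤ) (z.1, z.2.1) * ((j : ℝ) * z.2.2.1 ^ (j - 1)) * z.2.2.2 ^ (N - k - j)) • Lp
        + (f (j:ℤ) (k:ℤ) (z.1, z.2.1) * z.2.2.1 ^ j *
            (((N - k - j : ℕ) : ℝ) * z.2.2.2 ^ (N - k - j - 1))) • Lr)) z := by
  apply HasFDerivAt.fun_sum
  intro k _
  apply HasFDerivAt.fun_sum
  intro j _
  exact term_fderiv (f (j:ℤ) (k:ℤ)) (hf _ _) j (N - k - j) z

lemma X_fderiv_apply (N : ℕ) (f : ℤ → ℤ → ℝ × ℝ → ℝ) (hf : ∀ j k, ContDiff ℝ (⊤ : ℕ∞) (f j k))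
    (z : P4) (e : P4) :
    fderiv ℝ (Xfun N f) z e
      = ∑ k ∈ Finset.range (N + 1), ∑ j ∈ Finset.range (N - k + 1),
        ((z.2.2.1 ^ j * z.2.2.2 ^ (N - k - j)) * (fderiv ℝ (f (j:ℤ) (k:ℤ)) (z.1, z.2.1) (e.1, e.2.1))
        + (f (j:ℤ) (k:ℤ) (z.1, z.2.1) * ((j : ℝ) * z.2.2.1 ^ (j - 1)) * z.2.2.2 ^ (N - k - j)) * e.2.2.1
        + (f (j:ℤ) (k:ℤ) (z.1, z.2.1) * z.2.2.1 ^ j *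
            (((N - k - j : ℕ) : ℝ) * z.2.2.2 ^ (N - k - j - 1))) * e.2.2.2) := by
  rw [(X_hasFDeriv N f hf z).fderiv]
  simp only [ContinuousLinearMap.sum_apply, ContinuousLinearMap.add_apply,
    ContinuousLinearMap.smul_apply, ContinuousLinearMap.comp_apply, smul_eq_mul,
    Lq_apply, Lp_apply, Lr_apply]

lemma ham_fderiv_apply (V : ℝ × ℝ → ℝ) (hV : ContDiff ℝ (⊤ : ℕ∞) V) (z : P4) (e : P4) :
    fderiv ℝ (Ham V) z e
      = 2 * z.2.2.1 * e.2.2.1 + 2 * z.2.2.2 * e.2.2.2 + fderiv ℝ V (z.1, z.2.1) (e.1, e.2.1) := by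
  have h : Ham V = fun z : P4 => z.2.2.1 ^ 2 + z.2.2.2 ^ 2 + V (z.1, z.2.1) := rfl
  rw [h, (((pow_p 2 z).fun_add (pow_r 2 z)).fun_add (comp_q V hV z)).fderiv]
  simp only [ContinuousLinearMap.add_apply, ContinuousLinearMap.smul_apply,
    ContinuousLinearMap.comp_apply, smul_eq_mul, Lq_apply, Lp_apply, Lr_apply]
  ring

lemma ham_dx (V : ℝ × ℝ → ℝ) (hV : ContDiff ℝ (⊤ : ℕ∞) V) (z : P4) :
    fderiv ℝ (Ham V) z (1, 0, 0, 0) = pdx V (z.1, z.2.1) := by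
  rw [ham_fderiv_apply V hV]; simp [pdx]

lemma ham_dy (V : ℝ × ℝ → ℝ) (hV : ContDiff ℝ (⊤ : ℕ∞) V) (z : P4) :
    fderiv ℝ (Ham V) z (0, 1, 0, 0) = pdy V (z.1, z.2.1) := by
  rw [ham_fderiv_apply V hV]; simp [pdy]

lemma ham_dp (V : ℝ × ℝ → ℝ) (hV : ContDiff ℝ (⊤ : ℕ∞) V) (z : P4) :
    fderiv ℝ (Ham V) z (0, 0, 1, 0) = 2 * z.2.2.1 := by
  rw [ham_fderiv_apply V hV]; simp [Prod.mk_zero_zero]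

lemma ham_dr (V : ℝ × ℝ → ℝ) (hV : ContDiff ℝ (⊤ : ℕ∞) V) (z : P4) :
    fderiv ℝ (Ham V) z (0, 0, 0, 1) = 2 * z.2.2.2 := by
  rw [ham_fderiv_apply V hV]; simp [Prod.mk_zero_zero]

lemma X_dx (N : ℕ) (f : ℤ → ℤ → ℝ × ℝ → ℝ) (hf : ∀ j k, ContDiff ℝ (⊤ : ℕ∞) (f j k)) (z : P4) :
    fderiv ℝ (Xfun N f) z (1, 0, 0, 0)
      = ∑ k ∈ Finset.range (N + 1), ∑ j ∈ Finset.range (N - k + 1),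
          pdx (f (j:ℤ) (k:ℤ)) (z.1, z.2.1) * z.2.2.1 ^ j * z.2.2.2 ^ (N - k - j) := by
  rw [X_fderiv_apply N f hf]
  refine Finset.sum_congr rfl fun k _ => Finset.sum_congr rfl fun j _ => ?_
  simp [pdx]; ring

lemma X_dy (N : ℕ) (f : ℤ → ℤ → ℝ × ℝ → ℝ) (hf : ∀ j k, ContDiff ℝ (⊤ : ℕ∞) (f j k)) (z : P4) :
    fderiv ℝ (Xfun N f) z (0, 1, 0, 0)
      = ∑ k ∈ Finset.range (N + 1), ∑ j ∈ Finset.range (N - k + 1),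
          pdy (f (j:ℤ) (k:ℤ)) (z.1, z.2.1) * z.2.2.1 ^ j * z.2.2.2 ^ (N - k - j) := by
  rw [X_fderiv_apply N f hf]
  refine Finset.sum_congr rfl fun k _ => Finset.sum_congr rfl fun j _ => ?_
  simp [pdy]; ring

lemma X_dp (N : ℕ) (f : ℤ → ℤ → ℝ × ℝ → ℝ) (hf : ∀ j k, ContDiff ℝ (⊤ : ℕ∞) (f j k)) (z : P4) :
    fderiv ℝ (Xfun N f) z (0, 0, 1, 0)
      = ∑ k ∈ Finset.range (N + 1), ∑ j ∈ Finset.range (N - k + 1),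
          f (j:ℤ) (k:ℤ) (z.1, z.2.1) * ((j : ℝ) * z.2.2.1 ^ (j - 1)) * z.2.2.2 ^ (N - k - j) := by
  rw [X_fderiv_apply N f hf]
  refine Finset.sum_congr rfl fun k _ => Finset.sum_congr rfl fun j _ => ?_
  simp [Prod.mk_zero_zero]

lemma X_dr (N : ℕ) (f : ℤ → ℤ → ℝ × ℝ → ℝ) (hf : ∀ j k, ContDiff ℝ (⊤ : ℕ∞) (f j k)) (z : P4) :
    fderiv ℝ (Xfun N f) z (0, 0, 0, 1)
      = ∑ k ∈ Finset.range (N + 1), ∑ j ∈ Finset.range (N - k + 1),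
          f (j:ℤ) (k:ℤ) (z.1, z.2.1) * z.2.2.1 ^ j *
            (((N - k - j : ℕ) : ℝ) * z.2.2.2 ^ (N - k - j - 1)) := by
  rw [X_fderiv_apply N f hf]
  refine Finset.sum_congr rfl fun k _ => Finset.sum_congr rfl fun j _ => ?_
  simp [Prod.mk_zero_zero]



lemma pdx_zero (q : ℝ × ℝ) : pdx (0 : ℝ × ℝ → ℝ) q = 0 := by
  have h : (0 : ℝ × ℝ → ℝ) = fun _ => (0:ℝ) := rfl
  rw [pdx, h, fderiv_const_apply]; simp

lemma pdy_zero (q : ℝ × ℝ) : pdy (0 : ℝ × ℝ → ℝ) q = 0 := by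
  have h : (0 : ℝ × ℝ → ℝ) = fun _ => (0:ℝ) := rfl
  rw [pdy, h, fderiv_const_apply]; simp

lemma reindex_core {s t : Finset (ℕ × ℕ)} (ps pt : ℕ × ℕ → Prop) [DecidablePred ps]
    [DecidablePred pt] {F G : ℕ × ℕ → ℝ}
    (hs : ∀ x ∈ s, F x ≠ 0 → ps x) (ht : ∀ x ∈ t, G x ≠ 0 → pt x)
    (i j : ℕ × ℕ → ℕ × ℕ)
    (hi : ∀ x ∈ s.filter ps, i x ∈ t.filter pt) (hj : ∀ x ∈ t.filter pt, j x ∈ s.filter ps)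
    (hji : ∀ x ∈ s.filter ps, j (i x) = x) (hij : ∀ x ∈ t.filter pt, i (j x) = x)
    (hFG : ∀ x ∈ s.filter ps, F x = G (i x)) :
    ∑ x ∈ s, F x = ∑ x ∈ t, G x := by
  rw [← Finset.sum_filter_of_ne hs, ← Finset.sum_filter_of_ne ht]
  exact Finset.sum_nbij' i j hi hj hji hij hFG

lemma extend_grid (N : ℕ) (S : ℕ → ℕ → ℝ) (h0 : ∀ k j, N < j + k → S k j = 0) :
    (∑ k ∈ Finset.range (N + 1), ∑ j ∈ Finset.range (N - k + 1), S k j)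
      = ∑ x ∈ Finset.range (N + 2) ×ˢ Finset.range (N + 2), S x.1 x.2 := by
  rw [Finset.sum_product']
  have h1 : ∀ k ∈ Finset.range (N + 1),
      (∑ j ∈ Finset.range (N - k + 1), S k j) = ∑ j ∈ Finset.range (N + 2), S k j := by
    intro k hk
    refine Finset.sum_subset (Finset.range_subset_range.mpr (by simp at hk; omega)) ?_
    intro j hj hnj
    simp only [Finset.mem_range] at hj hnj hk
    exact h0 k j (by omega)
  rw [Finset.sum_congr rfl h1]
  refine Finset.sum_subset (Finset.range_subset_range.mpr (by omega)) ?_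
  intro k hk hnk
  refine Finset.sum_eq_zero fun j hj => ?_
  simp only [Finset.mem_range] at hk hnk hj
  exact h0 k j (by omega)

variable {N : ℕ} {f : ℤ → ℤ → ℝ × ℝ → ℝ} {V : ℝ × ℝ → ℝ}

/-- The determining-equation coefficient. -/
def cE (N : ℕ) (V : ℝ × ℝ → ℝ) (f : ℤ → ℤ → ℝ × ℝ → ℝ) (q : ℝ × ℝ) (a b : ℕ) : ℝ :=
  2 * pdx (f ((a:ℤ) - 1) ((N:ℤ) + 1 - a - b)) q + 2 * pdy (f (a:ℤ) ((N:ℤ) + 1 - a - b)) q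
    - ((a:ℝ) + 1) * f ((a:ℤ) + 1) ((N:ℤ) - 1 - a - b) q * pdx V q
    - ((b:ℝ) + 1) * f (a:ℤ) ((N:ℤ) - 1 - a - b) q * pdy V q

section T
variable (hzero : ∀ j k : ℤ, (j < 0 ∨ k < 0 ∨ (N : ℤ) < j + k) → f j k = 0)
  (q : ℝ × ℝ) (p r : ℝ)
include hzero

lemma T1 :
    ∑ x ∈ Finset.range (N + 2) ×ˢ Finset.range (N + 2),
        2 * pdx (f (x.2:ℤ) (x.1:ℤ)) q * p ^ (x.2 + 1) * r ^ (N - x.1 - x.2)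
      = ∑ x ∈ Finset.range (N + 2) ×ˢ Finset.range (N + 2),
        2 * pdx (f ((x.1:ℤ) - 1) ((N:ℤ) + 1 - x.1 - x.2)) q * p ^ x.1 * r ^ x.2 := by
  refine reindex_core (fun x => x.2 + x.1 ≤ N) (fun x => 1 ≤ x.1 ∧ x.1 + x.2 ≤ N + 1)
    ?_ ?_ (fun x => (x.2 + 1, N - x.1 - x.2)) (fun y => (N + 1 - y.1 - y.2, y.1 - 1))
    ?_ ?_ ?_ ?_ ?_
  · intro x _ hF
    by_contra hc
    exact hF (by rw [hzero _ _ (by right; right; omega), pdx_zero]; ring)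
  · intro y _ hG
    by_contra hc
    rcases Decidable.not_and_iff_or_not.mp hc with h | h
    · exact hG (by rw [hzero _ _ (by left; omega), pdx_zero]; ring)
    · exact hG (by rw [hzero _ _ (by right; left; omega), pdx_zero]; ring)
  · intro x hx
    simp only [Finset.mem_filter, Finset.mem_product, Finset.mem_range] at hx ⊢; omega
  · intro y hy
    simp only [Finset.mem_filter, Finset.mem_product, Finset.mem_range] at hy ⊢; omega
  · intro x hx
    simp only [Finset.mem_filter, Finset.mem_product, Finset.mem_range] at hx
    ext <;> simp <;> omega
  · intro y hy
    simp only [Finset.mem_filter, Finset.mem_product, Finset.mem_range] at hy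
    ext <;> simp <;> omega
  · intro x hx
    simp only [Finset.mem_filter, Finset.mem_product, Finset.mem_range] at hx
    have h1 : ((x.2 + 1 : ℕ) : ℤ) - 1 = (x.2 : ℤ) := by omega
    have h2 : ((N:ℤ) + 1 - ((x.2 + 1 : ℕ) : ℤ) - ((N - x.1 - x.2 : ℕ) : ℤ)) = (x.1 : ℤ) := by omega
    rw [h1, h2]

lemma T2 :
    ∑ x ∈ Finset.range (N + 2) ×ˢ Finset.range (N + 2),
        2 * pdy (f (x.2:ℤ) (x.1:ℤ)) q * p ^ x.2 * r ^ (N - x.1 - x.2 + 1)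
      = ∑ x ∈ Finset.range (N + 2) ×ˢ Finset.range (N + 2),
        2 * pdy (f (x.1:ℤ) ((N:ℤ) + 1 - x.1 - x.2)) q * p ^ x.1 * r ^ x.2 := by
  refine reindex_core (fun x => x.2 + x.1 ≤ N) (fun x => 1 ≤ x.2 ∧ x.1 + x.2 ≤ N + 1)
    ?_ ?_ (fun x => (x.2, N + 1 - x.1 - x.2)) (fun y => (N + 1 - y.1 - y.2, y.1))
    ?_ ?_ ?_ ?_ ?_
  · intro x _ hF
    by_contra hc
    exact hF (by rw [hzero _ _ (by right; right; omega), pdy_zero]; ring)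
  · intro y _ hG
    by_contra hc
    rcases Decidable.not_and_iff_or_not.mp hc with h | h
    · exact hG (by rw [hzero _ _ (by right; right; omega), pdy_zero]; ring)
    · exact hG (by rw [hzero _ _ (by right; left; omega), pdy_zero]; ring)
  · intro x hx
    simp only [Finset.mem_filter, Finset.mem_product, Finset.mem_range] at hx ⊢; omega
  · intro y hy
    simp only [Finset.mem_filter, Finset.mem_product, Finset.mem_range] at hy ⊢; omega
  · intro x hx
    simp only [Finset.mem_filter, Finset.mem_product, Finset.mem_range] at hx
    ext <;> simp <;> omega
  · intro y hy
    simp only [Finset.mem_filter, Finset.mem_product, Finset.mem_range] at hy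
    ext <;> simp <;> omega
  · intro x hx
    simp only [Finset.mem_filter, Finset.mem_product, Finset.mem_range] at hx
    have h1 : ((N:ℤ) + 1 - (x.2 : ℤ) - ((N + 1 - x.1 - x.2 : ℕ) : ℤ)) = (x.1 : ℤ) := by omega
    have h2 : N - x.1 - x.2 + 1 = N + 1 - x.1 - x.2 := by omega
    rw [h1, h2]

lemma T3 :
    ∑ x ∈ Finset.range (N + 2) ×ˢ Finset.range (N + 2),
        f (x.2:ℤ) (x.1:ℤ) q * ((x.2 : ℝ) * p ^ (x.2 - 1)) * r ^ (N - x.1 - x.2) * pdx V q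
      = ∑ x ∈ Finset.range (N + 2) ×ˢ Finset.range (N + 2),
        ((x.1 : ℝ) + 1) * f ((x.1:ℤ) + 1) ((N:ℤ) - 1 - x.1 - x.2) q * pdx V q
          * p ^ x.1 * r ^ x.2 := by
  refine reindex_core (fun x => 1 ≤ x.2 ∧ x.2 + x.1 ≤ N) (fun x => x.1 + x.2 < N)
    ?_ ?_ (fun x => (x.2 - 1, N - x.1 - x.2)) (fun y => (N - 1 - y.1 - y.2, y.1 + 1))
    ?_ ?_ ?_ ?_ ?_
  · intro x _ hF
    by_contra hc
    rcases Decidable.not_and_iff_or_not.mp hc with h | h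
    · have hx2 : x.2 = 0 := by omega
      exact hF (by rw [hx2]; simp)
    · exact hF (by rw [hzero _ _ (by right; right; omega)]; simp)
  · intro y _ hG
    by_contra hc
    exact hG (by rw [hzero _ _ (by right; left; omega)]; simp)
  · intro x hx
    simp only [Finset.mem_filter, Finset.mem_product, Finset.mem_range] at hx ⊢; omega
  · intro y hy
    simp only [Finset.mem_filter, Finset.mem_product, Finset.mem_range] at hy ⊢; omega
  · intro x hx
    simp only [Finset.mem_filter, Finset.mem_product, Finset.mem_range] at hx
    ext <;> simp <;> omega
  · intro y hy
    simp only [Finset.mem_filter, Finset.mem_product, Finset.mem_range] at hy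
    ext <;> simp <;> omega
  · intro x hx
    simp only [Finset.mem_filter, Finset.mem_product, Finset.mem_range] at hx
    obtain ⟨k, j⟩ := x
    simp only at hx ⊢
    obtain ⟨j', rfl⟩ : ∃ j', j = j' + 1 := ⟨j - 1, by omega⟩
    have h1 : ((j' + 1 : ℕ) : ℤ) = ((j' + 1 - 1 : ℕ) : ℤ) + 1 := by omega
    have h2 : ((k : ℕ) : ℤ) = (N:ℤ) - 1 - ((j' + 1 - 1 : ℕ) : ℤ) - ((N - k - (j' + 1) : ℕ) : ℤ) := by
      omega
    have h3 : ((j' + 1 : ℕ) : ℝ) = ((j' + 1 - 1 : ℕ) : ℝ) + 1 := by push_cast; ring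
    rw [h3]
    rw [h1, h2]
    have h4 : j' + 1 - 1 = j' := rfl
    ring

lemma T4 :
    ∑ x ∈ Finset.range (N + 2) ×ˢ Finset.range (N + 2),
        f (x.2:ℤ) (x.1:ℤ) q * p ^ x.2
          * (((N - x.1 - x.2 : ℕ) : ℝ) * r ^ (N - x.1 - x.2 - 1)) * pdy V q
      = ∑ x ∈ Finset.range (N + 2) ×ˢ Finset.range (N + 2),
        ((x.2 : ℝ) + 1) * f (x.1:ℤ) ((N:ℤ) - 1 - x.1 - x.2) q * pdy V q
          * p ^ x.1 * r ^ x.2 := by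
  refine reindex_core (fun x => x.2 + x.1 + 1 ≤ N) (fun x => x.1 + x.2 < N)
    ?_ ?_ (fun x => (x.2, N - x.1 - x.2 - 1)) (fun y => (N - 1 - y.1 - y.2, y.1))
    ?_ ?_ ?_ ?_ ?_
  · intro x _ hF
    by_contra hc
    by_cases hx : (N:ℤ) < (x.2:ℤ) + (x.1:ℤ)
    · exact hF (by rw [hzero _ _ (by right; right; omega)]; simp)
    · have hm : N - x.1 - x.2 = 0 := by omega
      exact hF (by rw [hm]; simp)
  · intro y _ hG
    by_contra hc
    exact hG (by rw [hzero _ _ (by right; left; omega)]; simp)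
  · intro x hx
    simp only [Finset.mem_filter, Finset.mem_product, Finset.mem_range] at hx ⊢; omega
  · intro y hy
    simp only [Finset.mem_filter, Finset.mem_product, Finset.mem_range] at hy ⊢; omega
  · intro x hx
    simp only [Finset.mem_filter, Finset.mem_product, Finset.mem_range] at hx
    ext <;> simp <;> omega
  · intro y hy
    simp only [Finset.mem_filter, Finset.mem_product, Finset.mem_range] at hy
    ext <;> simp <;> omega
  · intro x hx
    simp only [Finset.mem_filter, Finset.mem_product, Finset.mem_range] at hx
    obtain ⟨k, j⟩ := x
    simp only at hx ⊢
    have h1 : ((k : ℕ) : ℤ) = (N:ℤ) - 1 - (j : ℤ) - ((N - k - j - 1 : ℕ) : ℤ) := by omega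
    have h2 : ((N - k - j : ℕ) : ℝ) = ((N - k - j - 1 : ℕ) : ℝ) + 1 := by
      have : (N - k - j : ℕ) = (N - k - j - 1) + 1 := by omega
      rw [this]; push_cast; ring
    rw [h2]
    nth_rewrite 1 [h1]
    ring

end T


lemma coeffs_zero {n : ℕ} (c : ℕ → ℝ) (h : ∀ s : ℝ, ∑ a ∈ Finset.range n, c a * s ^ a = 0) :
    ∀ a ∈ Finset.range n, c a = 0 := by
  have hP : (∑ a ∈ Finset.range n, Polynomial.C (c a) * Polynomial.X ^ a) = (0 : Polynomial ℝ) := by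
    apply Polynomial.funext
    intro s
    simpa [Polynomial.eval_finset_sum] using h s
  intro a ha
  have := congrArg (fun P : Polynomial ℝ => P.coeff a) hP
  simpa [Polynomial.finset_sum_coeff, Polynomial.coeff_C_mul, Polynomial.coeff_X_pow,
    Finset.sum_ite_eq' (Finset.range n), ha] using this

lemma coeffs_zero2 {n : ℕ} (c : ℕ → ℕ → ℝ)
    (h : ∀ s t : ℝ, ∑ a ∈ Finset.range n, ∑ b ∈ Finset.range n, c a b * s ^ a * t ^ b = 0) :
    ∀ a ∈ Finset.range n, ∀ b ∈ Finset.range n, c a b = 0 := by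
  intro a ha b hb
  have h1 : ∀ t s : ℝ, ∑ a ∈ Finset.range n, (∑ b ∈ Finset.range n, c a b * t ^ b) * s ^ a = 0 := by
    intro t s
    rw [← h s t]
    rw [Finset.sum_congr rfl]
    intro a _
    rw [Finset.sum_mul]
    exact Finset.sum_congr rfl fun b _ => by ring
  have h2 : ∀ t : ℝ, ∑ b ∈ Finset.range n, c a b * t ^ b = 0 := fun t =>
    coeffs_zero (fun a => ∑ b ∈ Finset.range n, c a b * t ^ b) (h1 t) a ha
  exact coeffs_zero (c a) h2 b hb


variable {N : ℕ} {f : ℤ → ℤ → ℝ × ℝ → ℝ} {V : ℝ × ℝ → ℝ}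

section R
variable (hzero : ∀ j k : ℤ, (j < 0 ∨ k < 0 ∨ (N : ℤ) < j + k) → f j k = 0)
  (q : ℝ × ℝ) (p r : ℝ)
include hzero

lemma R1 :
    2 * p * (∑ k ∈ Finset.range (N + 1), ∑ j ∈ Finset.range (N - k + 1),
        pdx (f (j:ℤ) (k:ℤ)) q * p ^ j * r ^ (N - k - j))
      = ∑ x ∈ Finset.range (N + 2) ×ˢ Finset.range (N + 2),
          2 * pdx (f ((x.1:ℤ) - 1) ((N:ℤ) + 1 - x.1 - x.2)) q * p ^ x.1 * r ^ x.2 := by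
  have he := extend_grid N (fun k j => pdx (f (j:ℤ) (k:ℤ)) q * p ^ j * r ^ (N - k - j))
    (fun k j h => by
      simp only [hzero (j:ℤ) (k:ℤ) (by right; right; omega), pdx_zero, zero_mul])
  calc 2 * p * (∑ k ∈ Finset.range (N + 1), ∑ j ∈ Finset.range (N - k + 1),
        pdx (f (j:ℤ) (k:ℤ)) q * p ^ j * r ^ (N - k - j))
      = ∑ x ∈ Finset.range (N + 2) ×ˢ Finset.range (N + 2),
          2 * pdx (f (x.2:ℤ) (x.1:ℤ)) q * p ^ (x.2 + 1) * r ^ (N - x.1 - x.2) := by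
        rw [he, Finset.mul_sum]
        exact Finset.sum_congr rfl fun x _ => by ring
    _ = _ := T1 hzero q p r

lemma R2 :
    2 * r * (∑ k ∈ Finset.range (N + 1), ∑ j ∈ Finset.range (N - k + 1),
        pdy (f (j:ℤ) (k:ℤ)) q * p ^ j * r ^ (N - k - j))
      = ∑ x ∈ Finset.range (N + 2) ×ˢ Finset.range (N + 2),
          2 * pdy (f (x.1:ℤ) ((N:ℤ) + 1 - x.1 - x.2)) q * p ^ x.1 * r ^ x.2 := by
  have he := extend_grid N (fun k j => pdy (f (j:ℤ) (k:ℤ)) q * p ^ j * r ^ (N - k - j))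
    (fun k j h => by
      simp only [hzero (j:ℤ) (k:ℤ) (by right; right; omega), pdy_zero, zero_mul])
  calc 2 * r * (∑ k ∈ Finset.range (N + 1), ∑ j ∈ Finset.range (N - k + 1),
        pdy (f (j:ℤ) (k:ℤ)) q * p ^ j * r ^ (N - k - j))
      = ∑ x ∈ Finset.range (N + 2) ×ˢ Finset.range (N + 2),
          2 * pdy (f (x.2:ℤ) (x.1:ℤ)) q * p ^ x.2 * r ^ (N - x.1 - x.2 + 1) := by
        rw [he, Finset.mul_sum]
        exact Finset.sum_congr rfl fun x _ => by ring
    _ = _ := T2 hzero q p r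

lemma R3 :
    pdx V q * (∑ k ∈ Finset.range (N + 1), ∑ j ∈ Finset.range (N - k + 1),
        f (j:ℤ) (k:ℤ) q * ((j : ℝ) * p ^ (j - 1)) * r ^ (N - k - j))
      = ∑ x ∈ Finset.range (N + 2) ×ˢ Finset.range (N + 2),
          ((x.1 : ℝ) + 1) * f ((x.1:ℤ) + 1) ((N:ℤ) - 1 - x.1 - x.2) q * pdx V q
            * p ^ x.1 * r ^ x.2 := by
  have he := extend_grid N (fun k j => f (j:ℤ) (k:ℤ) q * ((j : ℝ) * p ^ (j - 1)) * r ^ (N - k - j))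
    (fun k j h => by
      simp only [hzero (j:ℤ) (k:ℤ) (by right; right; omega), Pi.zero_apply, zero_mul])
  calc pdx V q * (∑ k ∈ Finset.range (N + 1), ∑ j ∈ Finset.range (N - k + 1),
        f (j:ℤ) (k:ℤ) q * ((j : ℝ) * p ^ (j - 1)) * r ^ (N - k - j))
      = ∑ x ∈ Finset.range (N + 2) ×ˢ Finset.range (N + 2),
          f (x.2:ℤ) (x.1:ℤ) q * ((x.2 : ℝ) * p ^ (x.2 - 1)) * r ^ (N - x.1 - x.2) * pdx V q := by
        rw [he, Finset.mul_sum]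
        exact Finset.sum_congr rfl fun x _ => by ring
    _ = _ := T3 hzero q p r

lemma R4 :
    pdy V q * (∑ k ∈ Finset.range (N + 1), ∑ j ∈ Finset.range (N - k + 1),
        f (j:ℤ) (k:ℤ) q * p ^ j * (((N - k - j : ℕ) : ℝ) * r ^ (N - k - j - 1)))
      = ∑ x ∈ Finset.range (N + 2) ×ˢ Finset.range (N + 2),
          ((x.2 : ℝ) + 1) * f (x.1:ℤ) ((N:ℤ) - 1 - x.1 - x.2) q * pdy V q
            * p ^ x.1 * r ^ x.2 := by
  have he := extend_grid N
    (fun k j => f (j:ℤ) (k:ℤ) q * p ^ j * (((N - k - j : ℕ) : ℝ) * r ^ (N - k - j - 1)))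
    (fun k j h => by
      simp only [hzero (j:ℤ) (k:ℤ) (by right; right; omega), Pi.zero_apply, zero_mul])
  calc pdy V q * (∑ k ∈ Finset.range (N + 1), ∑ j ∈ Finset.range (N - k + 1),
        f (j:ℤ) (k:ℤ) q * p ^ j * (((N - k - j : ℕ) : ℝ) * r ^ (N - k - j - 1)))
      = ∑ x ∈ Finset.range (N + 2) ×ˢ Finset.range (N + 2),
          f (x.2:ℤ) (x.1:ℤ) q * p ^ x.2
            * (((N - x.1 - x.2 : ℕ) : ℝ) * r ^ (N - x.1 - x.2 - 1)) * pdy V q := by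
        rw [he, Finset.mul_sum]
        exact Finset.sum_congr rfl fun x _ => by ring
    _ = _ := T4 hzero q p r

end R

lemma pbr_eq (hV : ContDiff ℝ (⊤ : ℕ∞) V) (hf : ∀ j k, ContDiff ℝ (⊤ : ℕ∞) (f j k))
    (hzero : ∀ j k : ℤ, (j < 0 ∨ k < 0 ∨ (N : ℤ) < j + k) → f j k = 0) (z : P4) :
    pbr (Ham V) (Xfun N f) z
      = ∑ a ∈ Finset.range (N + 2), ∑ b ∈ Finset.range (N + 2),
          cE N V f (z.1, z.2.1) a b * z.2.2.1 ^ a * z.2.2.2 ^ b := by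
  simp only [pbr]
  rw [ham_dp V hV z, ham_dr V hV z, ham_dx V hV z, ham_dy V hV z,
      X_dx N f hf z, X_dy N f hf z, X_dp N f hf z, X_dr N f hf z,
      R1 hzero (z.1, z.2.1) z.2.2.1 z.2.2.2, R2 hzero (z.1, z.2.1) z.2.2.1 z.2.2.2,
      R3 hzero (z.1, z.2.1) z.2.2.1 z.2.2.2, R4 hzero (z.1, z.2.1) z.2.2.1 z.2.2.2,
      ← Finset.sum_product']
  rw [← Finset.sum_add_distrib, ← Finset.sum_sub_distrib, ← Finset.sum_sub_distrib]
  exact Finset.sum_congr rfl fun x _ => by simp only [cE]; ring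

end Stmt0Aux

open Stmt0Aux in
/-- `{H, X} = 0` identically on `ℝ⁴` iff the classical determining equations
`2(∂_x f_{j−1,k} + ∂_y f_{j,k}) = (j+1) f_{j+1,k−2} ∂_x V + (N−k+2−j) f_{j,k−2} ∂_y V`
hold identically on `ℝ²` for all `0 ≤ k ≤ N+1`, `0 ≤ j ≤ N−k+1`, with the convention
`f_{j,k} = 0` whenever `j < 0`, `k < 0`, or `j + k > N`. -/
theorem stmt_0 (N : ℕ) (hN : 1 ≤ N) (V : ℝ × ℝ → ℝ) (hV : ContDiff ℝ (⊤ : ℕ∞) V)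
    (f : ℤ → ℤ → ℝ × ℝ → ℝ) (hf : ∀ j k, ContDiff ℝ (⊤ : ℕ∞) (f j k))
    (hzero : ∀ j k : ℤ, (j < 0 ∨ k < 0 ∨ (N : ℤ) < j + k) → f j k = 0) :
    (∀ z : ℝ × ℝ × ℝ × ℝ, pbr (Ham V) (Xfun N f) z = 0) ↔
      (∀ k j : ℤ, 0 ≤ k → k ≤ (N : ℤ) + 1 → 0 ≤ j → j ≤ (N : ℤ) - k + 1 →
        ∀ q : ℝ × ℝ,
          2 * (pdx (f (j - 1) k) q + pdy (f j k) q) =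
            ((j : ℝ) + 1) * f (j + 1) (k - 2) q * pdx V q +
              ((N : ℝ) - (k : ℝ) + 2 - (j : ℝ)) * f j (k - 2) q * pdy V q) := by
  constructor
  · intro h k j hk0 hk1 hj0 hj1 q
    have hall := coeffs_zero2 (n := N + 2) (cE N V f q) (fun s t => by
      have hz := h (q.1, q.2, s, t)
      rw [pbr_eq hV hf hzero] at hz
      simpa using hz)
    set a := j.toNat with hadef
    set b := ((N:ℤ) + 1 - k - j).toNat with hbdef
    have haz : (a : ℤ) = j := Int.toNat_of_nonneg hj0
    have hbz : (b : ℤ) = (N:ℤ) + 1 - k - j := Int.toNat_of_nonneg (by omega)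
    have hc := hall a (by simp only [Finset.mem_range]; omega)
      b (by simp only [Finset.mem_range]; omega)
    simp only [cE] at hc
    rw [haz, hbz] at hc
    have e1 : (N:ℤ) + 1 - j - ((N:ℤ) + 1 - k - j) = k := by ring
    have e2 : (N:ℤ) - 1 - j - ((N:ℤ) + 1 - k - j) = k - 2 := by ring
    rw [e1, e2] at hc
    have har : (a : ℝ) = (j : ℝ) := by exact_mod_cast haz
    have hbr : (b : ℝ) = (N : ℝ) + 1 - (k : ℝ) - (j : ℝ) := by
      have := congrArg (fun t : ℤ => (t : ℝ)) hbz
      push_cast at this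
      exact this
    rw [har, hbr] at hc
    linear_combination hc
  · intro h z
    rw [pbr_eq hV hf hzero]
    refine Finset.sum_eq_zero fun a ha => Finset.sum_eq_zero fun b hb => ?_
    simp only [Finset.mem_range] at ha hb
    suffices hce : cE N V f (z.1, z.2.1) a b = 0 by rw [hce]; ring
    by_cases hab : a + b ≤ N + 1
    · have hd := h ((N:ℤ) + 1 - a - b) (a:ℤ) (by omega) (by omega) (by omega) (by omega)
        (z.1, z.2.1)
      have e1 : (N:ℤ) + 1 - a - b - 2 = (N:ℤ) - 1 - a - b := by ring
      rw [e1] at hd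
      simp only [cE]
      push_cast at hd
      linear_combination hd
    · have h1 : f ((a:ℤ) - 1) ((N:ℤ) + 1 - a - b) = 0 := hzero _ _ (by right; left; omega)
      have h2 : f (a:ℤ) ((N:ℤ) + 1 - a - b) = 0 := hzero _ _ (by right; left; omega)
      have h3 : f ((a:ℤ) + 1) ((N:ℤ) - 1 - a - b) = 0 := hzero _ _ (by right; left; omega)
      have h4 : f (a:ℤ) ((N:ℤ) - 1 - a - b) = 0 := hzero _ _ (by right; left; omega)
      simp [cE, h1, h2, h3, h4, pdx_zero, pdy_zero]
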